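/- In the iterated twisted tensor product ℂH ⊗_{R₀₁} Ĝ ⊗_{R₁₂} ℂH, the multiplication on basis elements is given by (h₁ ⊗ δ_{g₁} ⊗ f₁)(h₂ ⊗ δ_{g₂} ⊗ f₂) = δ_{h₂⁻¹g₁, g₂f₁⁻¹} · (h₁h₂ ⊗ δ_{h₂⁻¹g₁} ⊗ f₁f₂), and this multiplication is associative. -/

import Mathlib

open scoped BigOperators

noncomputable section

variable {G : Type*} [Group G] [Fintype G] [DecidableEq G]

/-- The twisting map `R₀₁ : Ĝ ⊗ ℂH → ℂH ⊗ Ĝ`, `δ_g ⊗ h ↦ h ⊗ δ_{h⁻¹g}`, on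
coefficient functions (`Ĝ ⊗ ℂH` is modelled as `G × H → ℂ`, etc.). -/
def R01 (H : Subgroup G) (a : G × H → ℂ) : H × G → ℂ :=
  fun p => a ((p.1 : G) * p.2, p.1)

/-- The twisting map `R₁₂ : ℂH ⊗ Ĝ → Ĝ ⊗ ℂH`, `h ⊗ δ_g ↦ δ_{gh⁻¹} ⊗ h`. -/
def R12 (H : Subgroup G) (a : H × G → ℂ) : G × H → ℂ :=
  fun p => a (p.2, p.1 * (p.2 : G))

/-- Basis element `h ⊗ δ_g ⊗ f` of `ℂH ⊗_{R₀₁} Ĝ ⊗_{R₁₂} ℂH`. -/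
def bas3 (H : Subgroup G) (h : H) (g : G) (f : H) : H × G × H → ℂ :=
  fun p => if p = (h, g, f) then 1 else 0

/-- The multiplication of the iterated twisted tensor product `ℂH ⊗_{R₀₁} Ĝ ⊗_{R₁₂} ℂH`,
the bilinear extension of
`(h₁⊗δ_{g₁}⊗f₁)(h₂⊗δ_{g₂}⊗f₂) = h₁h₂ ⊗ δ_{h₂⁻¹g₁}δ_{g₂f₁⁻¹} ⊗ f₁f₂`. -/
def tmul3 (H : Subgroup G) [Fintype H] (a b : H × G × H → ℂ) : H × G × H → ℂ :=
  fun p => ∑ h₂ : H, ∑ f₁ : H,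
    a (p.1 * h₂⁻¹, (h₂ : G) * p.2.1, f₁) * b (h₂, p.2.1 * (f₁ : G), f₁⁻¹ * p.2.2)

lemma sum4 {H : Type*} [Fintype H] (F : H → H → H → H → ℂ) :
    ∑ a : H, ∑ b : H, ∑ c : H, ∑ d : H, F a b c d
      = ∑ x : H × H × H × H, F x.1 x.2.1 x.2.2.1 x.2.2.2 := by
  simp [Fintype.sum_prod_type]

/-- in `ℂH ⊗_{R₀₁} Ĝ ⊗_{R₁₂} ℂH`, on basis elements
`(h₁⊗δ_{g₁}⊗f₁)(h₂⊗δ_{g₂}⊗f₂) = δ_{h₂⁻¹g₁,g₂f₁⁻¹} (h₁h₂ ⊗ δ_{h₂⁻¹g₁} ⊗ f₁f₂)`, and this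
multiplication is associative. -/
theorem statement15 (H : Subgroup G) [Fintype H] :
    (∀ (h₁ h₂ f₁ f₂ : H) (g₁ g₂ : G),
      tmul3 H (bas3 H h₁ g₁ f₁) (bas3 H h₂ g₂ f₂)
        = if (h₂ : G)⁻¹ * g₁ = g₂ * (f₁ : G)⁻¹
            then bas3 H (h₁ * h₂) ((h₂ : G)⁻¹ * g₁) (f₁ * f₂) else 0) ∧
    (∀ a b c : H × G × H → ℂ, tmul3 H (tmul3 H a b) c = tmul3 H a (tmul3 H b c)) := by
  constructor
  · intro h₁ h₂ f₁ f₂ g₁ g₂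
    funext p
    obtain ⟨q₁, q₂, q₃⟩ := p
    simp only [tmul3, bas3, Prod.mk.injEq]
    rw [Fintype.sum_eq_single h₂]
    · rw [Fintype.sum_eq_single f₁]
      · split_ifs with hc h1 h2 h3 <;>
          simp_all [bas3, Prod.ext_iff, eq_comm, mul_assoc, mul_inv_eq_iff_eq_mul,
            inv_mul_eq_iff_eq_mul, eq_inv_mul_iff_mul_eq, eq_mul_inv_iff_mul_eq]
      · intro l hl
        simp [hl]
    · intro k hk
      simp [hk]
  · intro a b c
    funext p
    obtain ⟨q₁, q₂, q₃⟩ := p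
    simp only [tmul3, Finset.sum_mul, Finset.mul_sum]
    rw [sum4, sum4]
    apply Fintype.sum_equiv
      ⟨fun x => (x.2.2.1 * x.1, x.2.2.2, x.1, x.2.2.2⁻¹ * x.2.1),
       fun x => (x.2.2.1, x.2.1 * x.2.2.2, x.1 * x.2.2.1⁻¹, x.2.1),
       fun x => by simp, fun x => by simp⟩
    intro x
    obtain ⟨h₃, f₂, h₂, f₁⟩ := x
    simp only [Equiv.coe_fn_mk]
    rw [mul_assoc]
    congr 1
    · congr 1
      simp [Prod.ext_iff, mul_assoc, mul_inv_rev]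
    congr 1
    · congr 1
      simp [Prod.ext_iff, mul_assoc, mul_inv_rev]
    · congr 1
      simp [Prod.ext_iff, mul_assoc, mul_inv_rev]
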